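/- Let $N \ge 1$, $\rho > 0$, $\alpha > N$ and $0 < \beta < N$. Suppose $y, x \in \mathbb{R}^N$ and $t > 0$ satisfy $|y-x|^2 + t^2 = \rho^2$. Then there exists a constant $C>0$ (depending on $N,\alpha,\beta,\rho$ but not on $y,x,t$) such that $$\int_{\mathbb{R}^N} \frac{1}{(t+|z|)^{\alpha}} \cdot \frac{1}{|y-z-x|^{\beta}}\, dz \le C\Big(\frac{1}{(1+|y-x|)^{\beta}}\cdot\frac{1}{t^{\alpha-N}} + \frac{1}{(1+|y-x|)^{\alpha+\beta-N}}\Big).$$ -/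

import Mathlib

open Real MeasureTheory Metric Set Filter


lemma aux_ball (N : ℕ) (β : ℝ) (hβ0 : 0 < β) (hβ : β < (N:ℝ)) (r : ℝ) :
    IntegrableOn (fun u : EuclideanSpace ℝ (Fin N) => ‖u‖ ^ (-β))
      (closedBall (0 : EuclideanSpace ℝ (Fin N)) r) := by
  set E := EuclideanSpace ℝ (Fin N)
  set μ : Measure E := volume.restrict (closedBall (0 : E) r)
  have hmeas : Measurable fun u : E => ‖u‖ ^ (-β) := by fun_prop
  refine ⟨hmeas.aestronglyMeasurable, ?_⟩
  have h_nonneg : ∀ u : E, 0 ≤ ‖u‖ ^ (-β) := fun u => rpow_nonneg (norm_nonneg u) _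
  have heq : (∫⁻ u, ‖(‖u‖ : ℝ) ^ (-β)‖ₑ ∂μ) = ∫⁻ u, ENNReal.ofReal (‖u‖ ^ (-β)) ∂μ :=
    lintegral_enorm_of_nonneg h_nonneg
  rw [HasFiniteIntegral, heq,
    lintegral_eq_lintegral_meas_le μ (Eventually.of_forall h_nonneg) hmeas.aemeasurable]
  -- bound the measure of superlevel sets
  have hsub : ∀ t : ℝ, 0 < t → {a : E | t ≤ ‖a‖ ^ (-β)} ⊆ closedBall 0 (t ^ (-β⁻¹)) := by
    intro t ht a ha
    simp only [mem_setOf_eq] at ha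
    have ha0 : a ≠ 0 := by
      rintro rfl
      rw [norm_zero, zero_rpow (by simp [ne_of_gt hβ0] : -β ≠ 0)] at ha; linarith
    have hna : 0 < ‖a‖ := norm_pos_iff.2 ha0
    have h2 := rpow_le_rpow_of_nonpos ht ha
      (by simp [le_of_lt (inv_pos.2 hβ0)] : -β⁻¹ ≤ 0)
    rw [mem_closedBall_zero_iff]
    calc ‖a‖ = (‖a‖ ^ (-β)) ^ (-β⁻¹) := by
          rw [← rpow_mul hna.le, neg_mul_neg, mul_inv_cancel₀ (ne_of_gt hβ0), rpow_one]
      _ ≤ t ^ (-β⁻¹) := h2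
  have hVb : (volume (ball (0:E) 1)) < ⊤ := measure_ball_lt_top
  -- split the t-integral
  calc ∫⁻ t in Ioi (0:ℝ), μ {a : E | t ≤ ‖a‖ ^ (-β)}
      ≤ ∫⁻ t in Ioc (0:ℝ) 1 ∪ Ioi 1, μ {a : E | t ≤ ‖a‖ ^ (-β)} :=
        lintegral_mono_set Ioi_subset_Ioc_union_Ioi
    _ ≤ (∫⁻ t in Ioc (0:ℝ) 1, μ {a : E | t ≤ ‖a‖ ^ (-β)}) +
        ∫⁻ t in Ioi (1:ℝ), μ {a : E | t ≤ ‖a‖ ^ (-β)} := lintegral_union_le _ _ _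
    _ < ⊤ := by
        refine ENNReal.add_lt_top.2 ⟨?_, ?_⟩
        · calc (∫⁻ t in Ioc (0:ℝ) 1, μ {a : E | t ≤ ‖a‖ ^ (-β)})
              ≤ ∫⁻ _ in Ioc (0:ℝ) 1, μ univ := by
                refine setLIntegral_mono' measurableSet_Ioc fun t _ => measure_mono (subset_univ _)
            _ = μ univ * volume (Ioc (0:ℝ) 1) := by rw [setLIntegral_const]
            _ < ⊤ := by
                refine ENNReal.mul_lt_top ?_ (by simp)
                simpa [μ, Measure.restrict_apply] using measure_closedBall_lt_top (x := (0:E)) (r := r)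
        · have hb : ∀ t : ℝ, t ∈ Ioi (1:ℝ) → μ {a : E | t ≤ ‖a‖ ^ (-β)} ≤
              ENNReal.ofReal (t ^ (-(N * β⁻¹))) * volume (ball (0:E) 1) := by
            intro t ht
            have ht0 : (0:ℝ) < t := lt_trans zero_lt_one ht
            calc μ {a : E | t ≤ ‖a‖ ^ (-β)} ≤ μ (closedBall 0 (t ^ (-β⁻¹))) :=
                  measure_mono (hsub t ht0)
              _ ≤ volume (closedBall (0:E) (t ^ (-β⁻¹))) := Measure.restrict_le_self _
              _ = ENNReal.ofReal ((t ^ (-β⁻¹)) ^ (Module.finrank ℝ E)) * volume (ball (0:E) 1) :=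
                  Measure.addHaar_closedBall _ _ (rpow_nonneg ht0.le _)
              _ = ENNReal.ofReal (t ^ (-(N * β⁻¹))) * volume (ball (0:E) 1) := by
                  rw [← rpow_natCast (t ^ (-β⁻¹)), ← rpow_mul ht0.le,
                    finrank_euclideanSpace_fin]
                  ring_nf
          calc (∫⁻ t in Ioi (1:ℝ), μ {a : E | t ≤ ‖a‖ ^ (-β)})
              ≤ ∫⁻ t in Ioi (1:ℝ), ENNReal.ofReal (t ^ (-(N * β⁻¹))) * volume (ball (0:E) 1) :=
                setLIntegral_mono' measurableSet_Ioi hb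
            _ = (∫⁻ t in Ioi (1:ℝ), ENNReal.ofReal (t ^ (-(N * β⁻¹)))) * volume (ball (0:E) 1) := by
                rw [lintegral_mul_const' _ _ (ne_of_lt hVb)]
            _ < ⊤ := by
                refine ENNReal.mul_lt_top ?_ hVb
                refine IntegrableOn.setLIntegral_lt_top ?_
                refine integrableOn_Ioi_rpow_of_lt ?_ zero_lt_one
                rw [neg_lt_neg_iff, ← div_eq_mul_inv, lt_div_iff₀ hβ0, one_mul]
                exact hβ


lemma aux_K (N : ℕ) (β γ ρ : ℝ) (hβ0 : 0 < β) (hβ : β < (N:ℝ)) (hγ0 : 0 ≤ γ)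
    (hγβ : (N:ℝ) < γ + β) (hρ : 0 < ρ) :
    ∃ K > 0, ∀ w : EuclideanSpace ℝ (Fin N), ‖w‖ ≤ ρ →
      Integrable (fun z => (1 + ‖z‖) ^ (-γ) * ‖w - z‖ ^ (-β)) ∧
      (∫ z : EuclideanSpace ℝ (Fin N), (1 + ‖z‖) ^ (-γ) * ‖w - z‖ ^ (-β)) ≤ K := by
  set E := EuclideanSpace ℝ (Fin N)
  set R : ℝ := 2 * ρ + 2 with hR
  set K1 : ℝ := ∫ u in closedBall (0:E) (R + ρ), ‖u‖ ^ (-β) with hK1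
  have hIint : Integrable (fun z : E => (1 + ‖z‖) ^ (-(γ + β))) :=
    integrable_one_add_norm (by rw [finrank_euclideanSpace_fin]; exact hγβ)
  set I : ℝ := ∫ z : E, (1 + ‖z‖) ^ (-(γ + β)) with hI
  have hK1nn : 0 ≤ K1 := integral_nonneg fun u => rpow_nonneg (norm_nonneg u) _
  have hInn : 0 ≤ I := integral_nonneg fun z => rpow_nonneg (by positivity) _
  refine ⟨K1 + 4 ^ β * I + 1, by positivity, fun w hw => ?_⟩
  have hball := aux_ball N β hβ0 hβ (R + ρ)
  set F : E → ℝ := (closedBall (0:E) (R + ρ)).indicator (fun u => ‖u‖ ^ (-β)) with hF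
  have hFint : Integrable F := by
    rw [hF]
    exact (integrable_indicator_iff measurableSet_closedBall).2 hball
  have hFnn : ∀ u, 0 ≤ F u := fun u =>
    indicator_nonneg (fun v _ => rpow_nonneg (norm_nonneg v) _) u
  have hFcomp : Integrable fun z : E => F (w - z) := hFint.comp_sub_left w
  have hFval : (∫ z : E, F (w - z)) = K1 := by
    rw [integral_sub_left_eq_self F volume w, hF, integral_indicator measurableSet_closedBall]
  -- indicator part
  set g1 : E → ℝ := (closedBall (0:E) R).indicator (fun z => ‖w - z‖ ^ (-β)) with hg1
  have hg1nn : ∀ z, 0 ≤ g1 z := fun z =>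
    indicator_nonneg (fun v _ => rpow_nonneg (norm_nonneg _) _) z
  have hg1le : ∀ z, g1 z ≤ F (w - z) := by
    intro z
    by_cases hz : z ∈ closedBall (0:E) R
    · rw [hg1, indicator_of_mem hz]
      have : w - z ∈ closedBall (0:E) (R + ρ) := by
        rw [mem_closedBall_zero_iff] at hz ⊢
        calc ‖w - z‖ ≤ ‖w‖ + ‖z‖ := norm_sub_le _ _
          _ ≤ R + ρ := by linarith
      rw [hF, indicator_of_mem this]
    · rw [hg1, indicator_of_notMem hz]
      exact hFnn _
  have hg1meas : Measurable g1 := by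
    refine Measurable.indicator (by fun_prop) measurableSet_closedBall
  have hg1int : Integrable g1 := by
    refine hFcomp.mono' hg1meas.aestronglyMeasurable (Eventually.of_forall fun z => ?_)
    rw [Real.norm_of_nonneg (hg1nn z)]; exact hg1le z
  have hg1val : (∫ z, g1 z) ≤ K1 := by
    rw [← hFval]
    exact integral_mono_of_nonneg (Eventually.of_forall hg1nn) hFcomp
      (Eventually.of_forall hg1le)
  -- full dominating function
  set G : E → ℝ := fun z => g1 z + 4 ^ β * (1 + ‖z‖) ^ (-(γ + β)) with hG
  have hGint : Integrable G := hg1int.add (hIint.const_mul _)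
  have hle : ∀ z : E, (1 + ‖z‖) ^ (-γ) * ‖w - z‖ ^ (-β) ≤ G z := by
    intro z
    have h1z : (0:ℝ) < 1 + ‖z‖ := by positivity
    by_cases hz : z ∈ closedBall (0:E) R
    · have h1 : (1 + ‖z‖) ^ (-γ) ≤ 1 :=
        rpow_le_one_of_one_le_of_nonpos (by linarith [norm_nonneg z]) (by linarith)
      have : (1 + ‖z‖) ^ (-γ) * ‖w - z‖ ^ (-β) ≤ 1 * ‖w - z‖ ^ (-β) :=
        mul_le_mul_of_nonneg_right h1 (rpow_nonneg (norm_nonneg _) _)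
      rw [one_mul] at this
      have h2 : g1 z = ‖w - z‖ ^ (-β) := by rw [hg1, indicator_of_mem hz]
      have h3 : 0 ≤ 4 ^ β * (1 + ‖z‖) ^ (-(γ + β)) := by positivity
      rw [hG]; dsimp only; linarith [h2 ▸ this]
    · rw [mem_closedBall_zero_iff, not_le] at hz
      have hwz : (1 + ‖z‖) / 4 ≤ ‖w - z‖ := by
        have h4 : ‖z‖ - ‖w‖ ≤ ‖z - w‖ := by
          have := norm_sub_norm_le z w; linarith [this]
        rw [norm_sub_rev w z]
        have : ‖z‖ - ρ ≤ ‖z - w‖ := by linarith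
        linarith [hz, hw, this]
      have h5 : ‖w - z‖ ^ (-β) ≤ ((1 + ‖z‖) / 4) ^ (-β) :=
        rpow_le_rpow_of_nonpos (by positivity) hwz (by linarith)
      have h6 : ((1 + ‖z‖) / 4) ^ (-β) = 4 ^ β * (1 + ‖z‖) ^ (-β) := by
        rw [div_rpow h1z.le (by norm_num : (0:ℝ) ≤ 4), Real.rpow_neg (by norm_num : (0:ℝ) ≤ 4)]
        field_simp
      have h7 : (1 + ‖z‖) ^ (-γ) * ‖w - z‖ ^ (-β) ≤ (1+‖z‖) ^ (-γ) * (4 ^ β * (1 + ‖z‖) ^ (-β)) := by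
        rw [← h6]
        exact mul_le_mul_of_nonneg_left h5 (rpow_nonneg h1z.le _)
      have h8 : (1+‖z‖) ^ (-γ) * (4 ^ β * (1 + ‖z‖) ^ (-β)) = 4 ^ β * (1 + ‖z‖) ^ (-(γ + β)) := by
        rw [neg_add, Real.rpow_add h1z]; ring
      have h9 : 0 ≤ g1 z := hg1nn z
      rw [hG]; dsimp only; linarith [h7, h8 ▸ h7]
  have hprodnn : ∀ z : E, 0 ≤ (1 + ‖z‖) ^ (-γ) * ‖w - z‖ ^ (-β) := fun z => by positivity
  have hprodint : Integrable (fun z : E => (1 + ‖z‖) ^ (-γ) * ‖w - z‖ ^ (-β)) := by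
    have hm : Measurable fun z : E => (1 + ‖z‖) ^ (-γ) * ‖w - z‖ ^ (-β) := by fun_prop
    refine hGint.mono' hm.aestronglyMeasurable (Eventually.of_forall fun z => ?_)
    rw [Real.norm_of_nonneg (hprodnn z)]; exact hle z
  refine ⟨hprodint, ?_⟩
  calc (∫ z : E, (1 + ‖z‖) ^ (-γ) * ‖w - z‖ ^ (-β)) ≤ ∫ z, G z :=
        integral_mono_of_nonneg (Eventually.of_forall hprodnn) hGint (Eventually.of_forall hle)
    _ = (∫ z, g1 z) + ∫ z : E, 4 ^ β * (1 + ‖z‖) ^ (-(γ + β)) := integral_add hg1int (hIint.const_mul _)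
    _ = (∫ z, g1 z) + 4 ^ β * I := by rw [integral_const_mul]
    _ ≤ K1 + 4 ^ β * I + 1 := by nlinarith [hg1val]


lemma aux_pt (α t m s : ℝ) (hα : 0 ≤ α) (hm : 0 < m) (hmt : m ≤ t) (hm1 : m ≤ 1) (hs : 0 ≤ s) :
    (t + s) ^ (-α) ≤ m ^ (-α) * (1 + s) ^ (-α) := by
  have h1 : m * (1 + s) ≤ t + s := by nlinarith
  have h2 := rpow_le_rpow_of_nonpos (by positivity) h1 (neg_nonpos.2 hα)
  rwa [mul_rpow hm.le (by positivity)] at h2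

lemma aux_tint (N : ℕ) (α t : ℝ) (ht : 0 < t) (hα : (N:ℝ) < α) :
    Integrable (fun z : EuclideanSpace ℝ (Fin N) => (t + ‖z‖) ^ (-α)) := by
  have h0α : (0:ℝ) ≤ α := le_trans (Nat.cast_nonneg N) hα.le
  set m : ℝ := min t 1 with hm
  have hm0 : 0 < m := lt_min ht one_pos
  have hint : Integrable (fun z : EuclideanSpace ℝ (Fin N) => (1 + ‖z‖) ^ (-α)) :=
    integrable_one_add_norm (by rw [finrank_euclideanSpace_fin]; exact hα)
  have hms : Measurable fun z : EuclideanSpace ℝ (Fin N) => (t + ‖z‖) ^ (-α) := by fun_prop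
  refine (hint.const_mul (m ^ (-α))).mono' hms.aestronglyMeasurable
    (Eventually.of_forall fun z => ?_)
  rw [Real.norm_of_nonneg (rpow_nonneg (by positivity) _)]
  exact aux_pt α t m ‖z‖ h0α hm0 (min_le_left _ _) (min_le_right _ _) (norm_nonneg z)

lemma aux_scale (N : ℕ) (α t : ℝ) (ht : 0 < t) :
    (∫ z : EuclideanSpace ℝ (Fin N), (t + ‖z‖) ^ (-α)) =
      t ^ ((N:ℝ) - α) * ∫ z : EuclideanSpace ℝ (Fin N), (1 + ‖z‖) ^ (-α) := by
  set E := EuclideanSpace ℝ (Fin N)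
  have h1 : ∀ z : E, (t + ‖z‖) ^ (-α) = t ^ (-α) * (1 + ‖t⁻¹ • z‖) ^ (-α) := by
    intro z
    have hnz : ‖t⁻¹ • z‖ = ‖z‖ / t := by
      rw [norm_smul, Real.norm_eq_abs, abs_inv, abs_of_pos ht, div_eq_inv_mul]
    rw [hnz]
    have h2 : 1 + ‖z‖ / t = (t + ‖z‖) / t := by field_simp
    rw [h2, div_rpow (by positivity) ht.le]
    have hc : t ^ (-α) ≠ 0 := (rpow_pos_of_pos ht _).ne'
    rw [eq_comm, mul_comm, div_mul_cancel₀ _ hc]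
  calc (∫ z : E, (t + ‖z‖) ^ (-α))
      = ∫ z : E, t ^ (-α) * (1 + ‖t⁻¹ • z‖) ^ (-α) := by simp_rw [h1]
    _ = t ^ (-α) * ∫ z : E, (1 + ‖t⁻¹ • z‖) ^ (-α) := integral_const_mul _ _
    _ = t ^ (-α) * (t ^ (Module.finrank ℝ E) • ∫ z : E, (1 + ‖z‖) ^ (-α)) := by
        rw [MeasureTheory.Measure.integral_comp_inv_smul_of_nonneg volume
          (fun z : E => (1 + ‖z‖) ^ (-α)) ht.le]
    _ = t ^ ((N:ℝ) - α) * ∫ z : E, (1 + ‖z‖) ^ (-α) := by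
        rw [smul_eq_mul, ← mul_assoc, finrank_euclideanSpace_fin, ← Real.rpow_natCast t N,
          ← Real.rpow_add ht]
        ring_nf


set_option maxHeartbeats 2000000 in
theorem stmt_3 (N : ℕ) (hN : 1 ≤ N) (ρ α β : ℝ) (hρ : 0 < ρ)
    (hα : (N:ℝ) < α) (hβ0 : 0 < β) (hβ : β < (N:ℝ)) :
    ∃ C > 0, ∀ (y x : EuclideanSpace ℝ (Fin N)) (t : ℝ), 0 < t →
      ‖y - x‖ ^ 2 + t ^ 2 = ρ ^ 2 →
      ∫ z : EuclideanSpace ℝ (Fin N),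
          1 / ((t + ‖z‖) ^ α * ‖y - z - x‖ ^ β) ≤
        C * (1 / (1 + ‖y - x‖) ^ β * (1 / t ^ (α - (N:ℝ))) +
          1 / (1 + ‖y - x‖) ^ (α + β - (N:ℝ))) := by
  set E := EuclideanSpace ℝ (Fin N)
  have hN0 : (0:ℝ) ≤ (N:ℝ) := Nat.cast_nonneg N
  have h0α : (0:ℝ) ≤ α := le_trans hN0 hα.le
  obtain ⟨Kα, hKα0, hKα⟩ := aux_K N β α ρ hβ0 hβ h0α (by linarith) hρ
  obtain ⟨Kn, hKn0, hKn⟩ := aux_K N β (N:ℝ) ρ hβ0 hβ hN0 (by linarith) hρ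
  have hIint : Integrable (fun z : E => (1 + ‖z‖) ^ (-α)) :=
    integrable_one_add_norm (by rw [finrank_euclideanSpace_fin]; exact hα)
  set Iα : ℝ := ∫ z : E, (1 + ‖z‖) ^ (-α) with hIα
  have hIαnn : 0 ≤ Iα := integral_nonneg fun z => rpow_nonneg (by positivity) _
  -- constants
  set m : ℝ := min (ρ/2) 1 with hm
  have hm0 : 0 < m := lt_min (by linarith) one_pos
  set c : ℝ := ρ/4 with hc
  have hc0 : 0 < c := by positivity
  set MB : ℝ := (c/(1+c)) ^ (-(N:ℝ)) with hMB
  have hMB0 : 0 < MB := rpow_pos_of_pos (by positivity) _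
  set DA : ℝ := m ^ (-α) * Kα * ρ ^ (α - (N:ℝ)) with hDA
  have hDA0 : 0 < DA := by
    have := rpow_pos_of_pos hm0 (-α); have := rpow_pos_of_pos hρ (α - (N:ℝ)); positivity
  set DB : ℝ := c ^ (-β) * Iα + MB * Kn with hDB
  have hDB0 : 0 < DB := by
    have h1 := rpow_pos_of_pos hc0 (-β); positivity
  set D : ℝ := DA + DB with hD
  have hD0 : 0 < D := by positivity
  refine ⟨(1+ρ) ^ β * D, by positivity, fun y x t ht hsph => ?_⟩
  set w : E := y - x with hw
  have hw2 : ‖w‖^2 + t^2 = ρ^2 := hsph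
  have htρ : t ≤ ρ := by nlinarith [norm_nonneg w]
  have hwρ : ‖w‖ ≤ ρ := by nlinarith [norm_nonneg w]
  -- rewrite the integrand
  have hre : (fun z : E => 1 / ((t + ‖z‖) ^ α * ‖y - z - x‖ ^ β)) =
      fun z : E => (t + ‖z‖) ^ (-α) * ‖w - z‖ ^ (-β) := by
    funext z
    have h1 : y - z - x = w - z := by rw [hw]; abel
    rw [h1, Real.rpow_neg (by positivity), Real.rpow_neg (norm_nonneg _), one_div, mul_inv]
  have hfnn : ∀ z : E, 0 ≤ (t + ‖z‖) ^ (-α) * ‖w - z‖ ^ (-β) := fun z => by positivity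
  -- the key estimate
  have key : (∫ z : E, (t + ‖z‖) ^ (-α) * ‖w - z‖ ^ (-β)) ≤ D * t ^ ((N:ℝ) - α) := by
    have htNα : (0:ℝ) < t ^ ((N:ℝ) - α) := rpow_pos_of_pos ht _
    by_cases hcase : ρ/2 ≤ t
    · -- Case A : t bounded below
      have hpt : ∀ z : E, (t + ‖z‖) ^ (-α) * ‖w - z‖ ^ (-β) ≤
          m ^ (-α) * ((1 + ‖z‖) ^ (-α) * ‖w - z‖ ^ (-β)) := by
        intro z
        have := aux_pt α t m ‖z‖ h0α hm0 (le_trans (min_le_left _ _) hcase)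
          (min_le_right _ _) (norm_nonneg z)
        calc (t + ‖z‖) ^ (-α) * ‖w - z‖ ^ (-β)
            ≤ (m ^ (-α) * (1 + ‖z‖) ^ (-α)) * ‖w - z‖ ^ (-β) :=
              mul_le_mul_of_nonneg_right this (rpow_nonneg (norm_nonneg _) _)
          _ = m ^ (-α) * ((1 + ‖z‖) ^ (-α) * ‖w - z‖ ^ (-β)) := by ring
      have hint2 := (hKα w hwρ).1.const_mul (m ^ (-α))
      have h2 : (∫ z : E, (t + ‖z‖) ^ (-α) * ‖w - z‖ ^ (-β)) ≤
          m ^ (-α) * ∫ z : E, (1 + ‖z‖) ^ (-α) * ‖w - z‖ ^ (-β) := by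
        rw [← integral_const_mul]
        exact integral_mono_of_nonneg (Eventually.of_forall hfnn) hint2
          (Eventually.of_forall hpt)
      have h3 : m ^ (-α) * (∫ z : E, (1 + ‖z‖) ^ (-α) * ‖w - z‖ ^ (-β)) ≤ m ^ (-α) * Kα :=
        mul_le_mul_of_nonneg_left (hKα w hwρ).2 (rpow_nonneg hm0.le _)
      have h4 : ρ ^ ((N:ℝ) - α) ≤ t ^ ((N:ℝ) - α) :=
        rpow_le_rpow_of_nonpos ht htρ (by linarith)
      have h5 : DA * ρ ^ ((N:ℝ) - α) = m ^ (-α) * Kα := by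
        rw [hDA, mul_assoc, mul_assoc, ← Real.rpow_add hρ]
        simp
      calc (∫ z : E, (t + ‖z‖) ^ (-α) * ‖w - z‖ ^ (-β)) ≤ m ^ (-α) * Kα := le_trans h2 h3
        _ = DA * ρ ^ ((N:ℝ) - α) := h5.symm
        _ ≤ DA * t ^ ((N:ℝ) - α) := mul_le_mul_of_nonneg_left h4 hDA0.le
        _ ≤ D * t ^ ((N:ℝ) - α) := by
            have : DA ≤ D := by rw [hD]; linarith
            exact mul_le_mul_of_nonneg_right this htNα.le
    · -- Case B : t small, |w| bounded below
      push_neg at hcase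
      have hwlow : ρ/2 ≤ ‖w‖ := by nlinarith [norm_nonneg w]
      set g1 : E → ℝ := fun z => c ^ (-β) * (t + ‖z‖) ^ (-α) with hg1
      set g2 : E → ℝ := fun z =>
        (t ^ ((N:ℝ) - α) * MB) * ((1 + ‖z‖) ^ (-(N:ℝ)) * ‖w - z‖ ^ (-β)) with hg2
      have hg1int : Integrable g1 := (aux_tint N α t ht hα).const_mul _
      have hg2int : Integrable g2 := (hKn w hwρ).1.const_mul _
      have hptB : ∀ z : E, (t + ‖z‖) ^ (-α) * ‖w - z‖ ^ (-β) ≤ g1 z + g2 z := by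
        intro z
        have hg2nn : 0 ≤ g2 z := by
          have : (0:ℝ) ≤ (1 + ‖z‖) ^ (-(N:ℝ)) * ‖w - z‖ ^ (-β) := by positivity
          positivity
        have hg1nn : 0 ≤ g1 z := by positivity
        by_cases hz : ‖z‖ ≤ c
        · -- near the origin : |w-z| bounded below
          have h6 : c ≤ ‖w - z‖ := by
            have := norm_sub_norm_le w z
            have h7 : ‖w‖ - ‖z‖ ≤ ‖w - z‖ := by linarith [this]
            rw [hc]; linarith
          have h8 : ‖w - z‖ ^ (-β) ≤ c ^ (-β) :=
            rpow_le_rpow_of_nonpos hc0 h6 (by linarith)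
          have h9 : (t + ‖z‖) ^ (-α) * ‖w - z‖ ^ (-β) ≤ g1 z := by
            rw [hg1]
            calc (t + ‖z‖) ^ (-α) * ‖w - z‖ ^ (-β) ≤ (t + ‖z‖) ^ (-α) * c ^ (-β) :=
                mul_le_mul_of_nonneg_left h8 (rpow_nonneg (by positivity) _)
              _ = c ^ (-β) * (t + ‖z‖) ^ (-α) := by ring
          linarith
        · push_neg at hz
          have hz0 : (0:ℝ) < ‖z‖ := lt_trans hc0 hz
          have hA : (t + ‖z‖) ^ ((N:ℝ) - α) ≤ t ^ ((N:ℝ) - α) :=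
            rpow_le_rpow_of_nonpos ht (by linarith [norm_nonneg z]) (by linarith)
          have hB : (t + ‖z‖) ^ (-(N:ℝ)) ≤ MB * (1 + ‖z‖) ^ (-(N:ℝ)) := by
            have h10 : (t + ‖z‖) ^ (-(N:ℝ)) ≤ ‖z‖ ^ (-(N:ℝ)) :=
              rpow_le_rpow_of_nonpos hz0 (by linarith) (by linarith)
            have h11 : (1 + ‖z‖) * (c/(1+c)) ≤ ‖z‖ := by
              rw [← mul_div_assoc, div_le_iff₀ (by positivity : (0:ℝ) < 1 + c)]
              nlinarith
            have h12 : ‖z‖ ^ (-(N:ℝ)) ≤ ((1 + ‖z‖) * (c/(1+c))) ^ (-(N:ℝ)) :=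
              rpow_le_rpow_of_nonpos (by positivity) h11 (by linarith)
            have h13 : ((1 + ‖z‖) * (c/(1+c))) ^ (-(N:ℝ)) = (1 + ‖z‖) ^ (-(N:ℝ)) * MB := by
              rw [mul_rpow (by positivity) (by positivity), hMB]
            linarith [h13 ▸ h12, h10]
          have h14 : (t + ‖z‖) ^ (-α) = (t + ‖z‖) ^ ((N:ℝ) - α) * (t + ‖z‖) ^ (-(N:ℝ)) := by
            rw [← Real.rpow_add (by positivity)]; ring_nf
          have h15 : (t + ‖z‖) ^ (-α) * ‖w - z‖ ^ (-β) ≤ g2 z := by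
            rw [h14, hg2]
            calc (t + ‖z‖) ^ ((N:ℝ) - α) * (t + ‖z‖) ^ (-(N:ℝ)) * ‖w - z‖ ^ (-β)
                ≤ t ^ ((N:ℝ) - α) * (MB * (1 + ‖z‖) ^ (-(N:ℝ))) * ‖w - z‖ ^ (-β) := by
                  refine mul_le_mul_of_nonneg_right ?_ (rpow_nonneg (norm_nonneg _) _)
                  exact mul_le_mul hA hB (rpow_nonneg (by positivity) _) htNα.le
              _ = (t ^ ((N:ℝ) - α) * MB) * ((1 + ‖z‖) ^ (-(N:ℝ)) * ‖w - z‖ ^ (-β)) := by ring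
          linarith
      have h16 : (∫ z : E, (t + ‖z‖) ^ (-α) * ‖w - z‖ ^ (-β)) ≤ ∫ z : E, g1 z + g2 z :=
        integral_mono_of_nonneg (Eventually.of_forall hfnn) (hg1int.add hg2int)
          (Eventually.of_forall hptB)
      have h17 : (∫ z : E, g1 z + g2 z) = c ^ (-β) * (t ^ ((N:ℝ) - α) * Iα) +
          (t ^ ((N:ℝ) - α) * MB) * ∫ z : E, (1 + ‖z‖) ^ (-(N:ℝ)) * ‖w - z‖ ^ (-β) := by
        rw [integral_add hg1int hg2int, hg1, hg2, integral_const_mul, integral_const_mul,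
          aux_scale N α t ht]
      have h18 : (t ^ ((N:ℝ) - α) * MB) * (∫ z : E, (1 + ‖z‖) ^ (-(N:ℝ)) * ‖w - z‖ ^ (-β)) ≤
          (t ^ ((N:ℝ) - α) * MB) * Kn :=
        mul_le_mul_of_nonneg_left (hKn w hwρ).2 (by positivity)
      calc (∫ z : E, (t + ‖z‖) ^ (-α) * ‖w - z‖ ^ (-β))
          ≤ c ^ (-β) * (t ^ ((N:ℝ) - α) * Iα) + (t ^ ((N:ℝ) - α) * MB) * Kn := by
            rw [h17] at h16; linarith
        _ = DB * t ^ ((N:ℝ) - α) := by rw [hDB]; ring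
        _ ≤ D * t ^ ((N:ℝ) - α) := by
            have : DB ≤ D := by rw [hD]; linarith
            exact mul_le_mul_of_nonneg_right this htNα.le
  -- conclude
  rw [hre]
  have hrw : t ^ ((N:ℝ) - α) = 1 / t ^ (α - (N:ℝ)) := by
    rw [one_div, ← Real.rpow_neg ht.le, neg_sub]
  have hterm2 : 0 ≤ 1 / (1 + ‖w‖) ^ (α + β - (N:ℝ)) := by positivity
  have hfac : 1 ≤ (1+ρ) ^ β * (1 / (1 + ‖w‖) ^ β) := by
    rw [mul_one_div, le_div_iff₀ (by positivity : (0:ℝ) < (1 + ‖w‖) ^ β), one_mul]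
    exact rpow_le_rpow (by positivity) (by linarith) hβ0.le
  have hmain : D * t ^ ((N:ℝ) - α) ≤
      (1+ρ) ^ β * D * (1 / (1 + ‖w‖) ^ β * (1 / t ^ (α - (N:ℝ)))) := by
    rw [hrw]
    have h20 : D * (1 / t ^ (α - (N:ℝ))) ≤
        ((1+ρ) ^ β * (1 / (1 + ‖w‖) ^ β)) * (D * (1 / t ^ (α - (N:ℝ)))) := by
      exact le_mul_of_one_le_left (by positivity) hfac
    calc D * (1 / t ^ (α - (N:ℝ))) ≤
        ((1+ρ) ^ β * (1 / (1 + ‖w‖) ^ β)) * (D * (1 / t ^ (α - (N:ℝ)))) := h20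
      _ = (1+ρ) ^ β * D * (1 / (1 + ‖w‖) ^ β * (1 / t ^ (α - (N:ℝ)))) := by ring
  calc (∫ z : E, (t + ‖z‖) ^ (-α) * ‖w - z‖ ^ (-β)) ≤ D * t ^ ((N:ℝ) - α) := key
    _ ≤ (1+ρ) ^ β * D * (1 / (1 + ‖w‖) ^ β * (1 / t ^ (α - (N:ℝ)))) := hmain
    _ ≤ (1+ρ) ^ β * D * (1 / (1 + ‖w‖) ^ β * (1 / t ^ (α - (N:ℝ))) +
          1 / (1 + ‖w‖) ^ (α + β - (N:ℝ))) := by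
        exact mul_le_mul_of_nonneg_left (le_add_of_nonneg_right hterm2)
          (by positivity)
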